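/- Let V be a K(x)-vector-space basis of A with aV′ = BV for a ∈ K[x], B ∈ K[x]^{n×n}, fix u ∈ K[x], and let φ_V(p) = (a u p′ − a u′ p + u p B)/u². Then for every p ∈ K[x]^n there exist p_1 ∈ K[x]^n and p_2 ∈ N_V such that (p/a)V = ((p_1/u)V)′ + (p_2/a)V, where N_V is the standard complement of im(φ_V). In particular, whenever q = φ_V(p), one has (q/a)V = ((p/u)V)′, so (q/a)V is integrable in A. -/

import Mathlib

set_option linter.unusedSectionVars false
set_option maxHeartbeats 1000000


noncomputable section
open scoped Classical
open Polynomial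

/-! ### The algebraic function field `A = K(x)[y]/⟨m⟩` -/

/-- The canonical image in `A = K(x)[y]/⟨m⟩` of a polynomial `p ∈ K[x]`. -/
def toA {K : Type} [Field K] (m : Polynomial (RatFunc K)) (p : Polynomial K) :
    AdjoinRoot m :=
  algebraMap (RatFunc K) (AdjoinRoot m) (algebraMap (Polynomial K) (RatFunc K) p)

/-- `D` is the derivation on `A = K(x)[y]/⟨m⟩` extending `d/dx` on `K(x)`:
it is additive, satisfies the Leibniz rule, and restricts to `d/dx` on `K[x]`
(hence, being a derivation on a field, on all of `K(x)`). -/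
structure IsDerivationOnA {K : Type} [Field K] (m : Polynomial (RatFunc K))
    (D : AdjoinRoot m → AdjoinRoot m) : Prop where
  map_add : ∀ f g, D (f + g) = D f + D g
  leibniz : ∀ f g, D (f * g) = f * D g + g * D f
  map_poly : ∀ p : Polynomial K, D (toA m p) = toA m (Polynomial.derivative p)

/-- `W` is a basis of `A` as a vector space over `K(x)`. -/
def IsKxBasis {K : Type} [Field K] {m : Polynomial (RatFunc K)}
    (W : Fin m.natDegree → AdjoinRoot m) : Prop :=
  LinearIndependent (RatFunc K) W ∧ Submodule.span (RatFunc K) (Set.range W) = ⊤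

/-- `e W′ = M W` componentwise. -/
def DerivRel {K : Type} [Field K] {m : Polynomial (RatFunc K)}
    (D : AdjoinRoot m → AdjoinRoot m) (W : Fin m.natDegree → AdjoinRoot m)
    (e : Polynomial K) (M : Matrix (Fin m.natDegree) (Fin m.natDegree) (Polynomial K)) : Prop :=
  ∀ i, toA m e * D (W i) = ∑ j, toA m (M i j) * W j

/-- `gcd(e, m₁₁, …, mₙₙ) = 1`: the only common divisors of `e` and the entries of `M`
are units. -/
def GcdOne {K : Type} [Field K] {n : ℕ}
    (e : Polynomial K) (M : Matrix (Fin n) (Fin n) (Polynomial K)) : Prop :=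
  ∀ p : Polynomial K, p ∣ e → (∀ i j, p ∣ M i j) → IsUnit p


/-! ### Polynomial reduction -/

/-- The map `φ_V` for polynomial reduction with respect to `u` and `V` (where `aV′ = BV`):
`φ_V(p) = (a u p′ − a u′ p + u p B)/u²`, a vector of rational functions. -/
def phiV {K : Type} [Field K] {n : ℕ} (a u : Polynomial K)
    (B : Matrix (Fin n) (Fin n) (Polynomial K)) (p : Fin n → Polynomial K) :
    Fin n → RatFunc K := fun j =>
  algebraMap (Polynomial K) (RatFunc K)
      (a * u * Polynomial.derivative (p j) - a * Polynomial.derivative u * p j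
        + u * ∑ i, p i * B i j) /
    algebraMap (Polynomial K) (RatFunc K) (u ^ 2)

/-- `im(φ_V) ∩ K[x]^n`: the set of polynomial vectors lying in the image of `φ_V`. -/
def phiPolyImage {K : Type} [Field K] {n : ℕ} (a u : Polynomial K)
    (B : Matrix (Fin n) (Fin n) (Polynomial K)) : Set (Fin n → Polynomial K) :=
  {q | ∃ p : Fin n → Polynomial K,
    ∀ j, algebraMap (Polynomial K) (RatFunc K) (q j) = phiV a u B p j}

/-- The degree of a vector `p ∈ K[x]^n`, viewed as a polynomial in `x` with coefficients
in `K^n`. -/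
def vdeg {K : Type} [Field K] {n : ℕ} (p : Fin n → Polynomial K) : ℕ :=
  Finset.univ.sup fun i => (p i).natDegree

/-- The leading term `lt(p) = p^{(r)} x^r` of a nonzero vector `p ∈ K[x]^n`, viewed as a
polynomial in `x` with coefficients in `K^n`. -/
def ltVec {K : Type} [Field K] {n : ℕ} (p : Fin n → Polynomial K) :
    Fin n → Polynomial K :=
  fun i => Polynomial.C ((p i).coeff (vdeg p)) * Polynomial.X ^ (vdeg p)

/-- The monomial vector `e_i x^j` (an element of the set `S`). -/
def monomialVec {K : Type} [Field K] {n : ℕ} (i : Fin n) (j : ℕ) :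
    Fin n → Polynomial K :=
  fun k => if k = i then Polynomial.X ^ j else 0

/-- The standard complement `N_V` of `im(φ_V)`: the `K`-subspace of `K[x]^n` spanned by the
monomial vectors `e_i x^j ∈ S` that are not the leading term of any (nonzero) element of
`im(φ_V) ∩ K[x]^n`. -/
def NVcomplement {K : Type} [Field K] {n : ℕ} (a u : Polynomial K)
    (B : Matrix (Fin n) (Fin n) (Polynomial K)) : Submodule K (Fin n → Polynomial K) :=
  Submodule.span K {t | ∃ i j, t = monomialVec i j ∧
    ∀ q ∈ phiPolyImage a u B, q ≠ 0 → t ≠ ltVec q}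

section A
variable {K : Type} [Field K] (m : Polynomial (RatFunc K)) [Fact (Irreducible m)]

lemma toA_ne_zero {p : Polynomial K} (hp : p ≠ 0) : toA m p ≠ 0 := by
  simp [toA, hp]

lemma toA_mul (p q : Polynomial K) : toA m (p * q) = toA m p * toA m q := by
  simp [toA]

lemma toA_add (p q : Polynomial K) : toA m (p + q) = toA m p + toA m q := by
  simp [toA]

lemma toA_sub (p q : Polynomial K) : toA m (p - q) = toA m p - toA m q := by
  simp [toA]

lemma toA_sum {ι : Type*} (s : Finset ι) (f : ι → Polynomial K) :
    toA m (∑ i ∈ s, f i) = ∑ i ∈ s, toA m (f i) := by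
  simp [toA, map_sum]

variable {D : AdjoinRoot m → AdjoinRoot m}

lemma D_zero (hD : IsDerivationOnA m D) : D 0 = 0 := by
  have := hD.map_add 0 0
  simpa using this.symm

lemma D_sum (hD : IsDerivationOnA m D) {ι : Type*} (s : Finset ι) (f : ι → AdjoinRoot m) :
    D (∑ i ∈ s, f i) = ∑ i ∈ s, D (f i) := by
  classical
  induction s using Finset.induction with
  | empty => simpa using D_zero m hD
  | insert _ _ h ih => simp [Finset.sum_insert h, hD.map_add, ih]

lemma D_div (hD : IsDerivationOnA m D) (p u : Polynomial K) (hu : u ≠ 0) :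
    D (toA m p / toA m u) = toA m (Polynomial.derivative p * u - p * Polynomial.derivative u)
      / toA m (u ^ 2) := by
  have hu' : toA m u ≠ 0 := toA_ne_zero m hu
  have h1 : toA m p / toA m u * toA m u = toA m p := div_mul_cancel₀ _ hu'
  have h2 := hD.leibniz (toA m p / toA m u) (toA m u)
  rw [h1, hD.map_poly, hD.map_poly] at h2
  rw [toA_sub, toA_mul, toA_mul]
  have : toA m (u ^ 2) = toA m u * toA m u := by rw [sq, toA_mul]
  rw [this]
  field_simp at h2 ⊢
  linear_combination -h2

lemma main_identity (hD : IsDerivationOnA m D)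
    (V : Fin m.natDegree → AdjoinRoot m)
    (a u : Polynomial K) (ha0 : a ≠ 0) (hu0 : u ≠ 0)
    (B : Matrix (Fin m.natDegree) (Fin m.natDegree) (Polynomial K))
    (hrel : DerivRel D V a B) (p : Fin m.natDegree → Polynomial K) :
    (∑ j, algebraMap (RatFunc K) (AdjoinRoot m)
        (phiV a u B p j / algebraMap (Polynomial K) (RatFunc K) a) * V j) =
      D (∑ j, toA m (p j) / toA m u * V j) := by
  have hua : toA m u ≠ 0 := toA_ne_zero m hu0
  have haa : toA m a ≠ 0 := toA_ne_zero m ha0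
  have hsq : toA m (u ^ 2) = toA m u * toA m u := by rw [sq, toA_mul]
  have halg : ∀ j, algebraMap (RatFunc K) (AdjoinRoot m)
      (phiV a u B p j / algebraMap (Polynomial K) (RatFunc K) a)
      = toA m (a * u * Polynomial.derivative (p j) - a * Polynomial.derivative u * p j
          + u * ∑ i, p i * B i j) / (toA m (u ^ 2) * toA m a) := by
    intro j
    rw [phiV, map_div₀, map_div₀, div_div]
    rfl
  have hDV : ∀ j, D (V j) = (∑ k, toA m (B j k) * V k) / toA m a := by
    intro j
    rw [eq_div_iff haa, mul_comm]
    exact hrel j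
  have hterm : ∀ j, D (toA m (p j) / toA m u * V j)
      = toA m (p j) / toA m u * ((∑ k, toA m (B j k) * V k) / toA m a)
        + V j * (toA m (Polynomial.derivative (p j) * u - p j * Polynomial.derivative u)
            / toA m (u ^ 2)) := by
    intro j
    rw [hD.leibniz, hDV j, D_div m hD _ _ hu0]
  rw [D_sum m hD]
  calc (∑ j, algebraMap (RatFunc K) (AdjoinRoot m)
        (phiV a u B p j / algebraMap (Polynomial K) (RatFunc K) a) * V j)
      = ∑ j, ((∑ i, toA m (p i) * toA m (B i j) / (toA m u * toA m a) * V j)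
          + V j * (toA m (Polynomial.derivative (p j) * u - p j * Polynomial.derivative u)
              / toA m (u ^ 2))) := by
        refine Finset.sum_congr rfl fun j _ => ?_
        rw [halg j]
        simp only [toA_add, toA_sub, toA_mul, toA_sum, hsq]
        rw [← Finset.sum_mul, ← Finset.sum_div]
        field_simp
        ring
    _ = (∑ j, ∑ i, toA m (p i) * toA m (B i j) / (toA m u * toA m a) * V j)
          + ∑ j, V j * (toA m (Polynomial.derivative (p j) * u - p j * Polynomial.derivative u)
              / toA m (u ^ 2)) := Finset.sum_add_distrib
    _ = (∑ i, ∑ j, toA m (p i) * toA m (B i j) / (toA m u * toA m a) * V j)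
          + ∑ j, V j * (toA m (Polynomial.derivative (p j) * u - p j * Polynomial.derivative u)
              / toA m (u ^ 2)) := by rw [Finset.sum_comm]
    _ = ∑ j, (toA m (p j) / toA m u * ((∑ k, toA m (B j k) * V k) / toA m a)
          + V j * (toA m (Polynomial.derivative (p j) * u - p j * Polynomial.derivative u)
              / toA m (u ^ 2))) := by
        rw [Finset.sum_add_distrib]
        congr 1
        refine Finset.sum_congr rfl fun j _ => ?_
        rw [Finset.sum_div, Finset.mul_sum]
        refine Finset.sum_congr rfl fun k _ => ?_
        field_simp
    _ = ∑ j, D (toA m (p j) / toA m u * V j) := by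
        refine Finset.sum_congr rfl fun j _ => ?_
        rw [hterm j]

end A

section Decomp
variable {K : Type} [Field K] {n : ℕ}

def muV (p : Fin n → Polynomial K) : ℕ :=
  if p = 0 then 0
  else n * vdeg p + (Finset.univ.filter fun i => (p i).coeff (vdeg p) ≠ 0).card

lemma natDegree_le_vdeg (p : Fin n → Polynomial K) (i : Fin n) :
    (p i).natDegree ≤ vdeg p :=
  Finset.le_sup (f := fun i => (p i).natDegree) (Finset.mem_univ i)

lemma exists_lead (p : Fin n → Polynomial K) (hp : p ≠ 0) :
    ∃ i, (p i).coeff (vdeg p) ≠ 0 := by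
  have hne : ∃ i, p i ≠ 0 := by
    by_contra h
    push_neg at h
    exact hp (funext h)
  obtain ⟨i0, hi0⟩ := hne
  rcases Nat.eq_zero_or_pos (vdeg p) with h0 | hpos
  · refine ⟨i0, ?_⟩
    have hd : (p i0).natDegree = 0 :=
      le_antisymm (h0 ▸ natDegree_le_vdeg p i0) (Nat.zero_le _)
    rw [h0, ← hd]
    exact fun hcf => hi0 (Polynomial.leadingCoeff_eq_zero.mp hcf)
  · obtain ⟨b, -, hb⟩ := Finset.exists_mem_eq_sup Finset.univ
      ⟨i0, Finset.mem_univ i0⟩ (fun i => (p i).natDegree)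
    have hvb : vdeg p = (p b).natDegree := hb
    have hpb : p b ≠ 0 := by
      intro h
      rw [h] at hvb
      simp at hvb
      omega
    refine ⟨b, ?_⟩
    rw [hvb]
    exact fun hcf => hpb (Polynomial.leadingCoeff_eq_zero.mp hcf)

lemma lt_analysis {q : Fin n → Polynomial K} (hq : q ≠ 0) {i : Fin n} {r : ℕ}
    (h : monomialVec i r = ltVec q) :
    vdeg q = r ∧ ∀ k, (q k).coeff (vdeg q) = if k = i then 1 else 0 := by
  obtain ⟨k0, hk0⟩ := exists_lead q hq
  have hk0i : k0 = i := by
    by_contra hne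
    have h0 := congrFun h k0
    simp only [monomialVec, ltVec, if_neg hne] at h0
    have := congrArg (fun f => Polynomial.coeff f (vdeg q)) h0
    simp [Polynomial.coeff_C_mul, Polynomial.coeff_X_pow] at this
    exact hk0 this.symm
  have heq : (Polynomial.X : Polynomial K) ^ r
      = Polynomial.C ((q i).coeff (vdeg q)) * Polynomial.X ^ (vdeg q) := by
    have h0 := congrFun h i
    simpa [monomialVec, ltVec] using h0
  have hd : vdeg q = r := by
    by_contra hne
    have := congrArg (fun f => Polynomial.coeff f r) heq
    simp [Polynomial.coeff_C_mul, Polynomial.coeff_X_pow, Ne.symm hne] at this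
  refine ⟨hd, fun k => ?_⟩
  have h0 := congrFun h k
  have := congrArg (fun f => Polynomial.coeff f (vdeg q)) h0
  simp only [monomialVec, ltVec] at this
  by_cases hk : k = i
  · simp [hk, hd, Polynomial.coeff_C_mul, Polynomial.coeff_X_pow] at this
    subst hk
    rw [if_pos rfl, hd]
    exact this.symm
  · simp [hk, hd, Polynomial.coeff_C_mul, Polynomial.coeff_X_pow] at this
    rw [if_neg hk, hd]
    exact this.symm

lemma muV_pos (p : Fin n → Polynomial K) (hp : p ≠ 0) : 0 < muV p := by
  obtain ⟨i, hi⟩ := exists_lead p hp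
  have h1 : 0 < (Finset.univ.filter fun i => (p i).coeff (vdeg p) ≠ 0).card :=
    Finset.card_pos.mpr ⟨i, by simp [hi]⟩
  rw [muV, if_neg hp]
  omega

lemma muV_lt_case (p p' : Fin n → Polynomial K) (hp : p ≠ 0)
    (hdeg : ∀ k, (p' k).natDegree ≤ vdeg p) (i : Fin n)
    (hi : (p i).coeff (vdeg p) ≠ 0) (hzero : (p' i).coeff (vdeg p) = 0)
    (hoth : ∀ k, (p' k).coeff (vdeg p) ≠ 0 → (p k).coeff (vdeg p) ≠ 0) :
    muV p' < muV p := by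
  by_cases h0 : p' = 0
  · rw [h0]
    have : muV (0 : Fin n → Polynomial K) = 0 := by rw [muV, if_pos rfl]
    rw [this]
    exact muV_pos p hp
  · have hvle : vdeg p' ≤ vdeg p := Finset.sup_le fun k _ => hdeg k
    have hmup : muV p = n * vdeg p
        + (Finset.univ.filter fun k => (p k).coeff (vdeg p) ≠ 0).card := by
      rw [muV, if_neg hp]
    have hmup' : muV p' = n * vdeg p'
        + (Finset.univ.filter fun k => (p' k).coeff (vdeg p') ≠ 0).card := by
      rw [muV, if_neg h0]
    have hcard : 0 < (Finset.univ.filter fun k => (p k).coeff (vdeg p) ≠ 0).card :=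
      Finset.card_pos.mpr ⟨i, by simp [hi]⟩
    rcases lt_or_eq_of_le hvle with hlt | heq
    · have hc' : (Finset.univ.filter fun k => (p' k).coeff (vdeg p') ≠ 0).card ≤ n := by
        calc _ ≤ (Finset.univ : Finset (Fin n)).card := Finset.card_filter_le _ _
          _ = n := Finset.card_fin n
      have hmul : n * vdeg p' + n ≤ n * vdeg p := by
        have h2 := Nat.mul_le_mul_left n (Nat.succ_le_of_lt hlt)
        simpa [Nat.mul_succ] using h2
      rw [hmup, hmup']
      omega
    · have hss : (Finset.univ.filter fun k => (p' k).coeff (vdeg p') ≠ 0)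
          ⊂ (Finset.univ.filter fun k => (p k).coeff (vdeg p) ≠ 0) := by
        rw [heq]
        constructor
        · intro k hk
          simp only [Finset.mem_filter, Finset.mem_univ, true_and] at hk ⊢
          exact hoth k hk
        · intro hsub
          have hi' : i ∈ (Finset.univ.filter fun k => (p k).coeff (vdeg p) ≠ 0) := by
            simp [hi]
          have := hsub hi'
          simp only [Finset.mem_filter, Finset.mem_univ, true_and] at this
          exact this hzero
      have hcards := Finset.card_lt_card hss
      rw [hmup, hmup']
      simp only [heq] at hcards ⊢
      omega

lemma phiV_zero (a u : Polynomial K) (B : Matrix (Fin n) (Fin n) (Polynomial K))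
    (j : Fin n) : phiV a u B 0 j = 0 := by
  simp [phiV]

lemma phiV_add (a u : Polynomial K) (B : Matrix (Fin n) (Fin n) (Polynomial K))
    (p q : Fin n → Polynomial K) (j : Fin n) :
    phiV a u B (fun k => p k + q k) j = phiV a u B p j + phiV a u B q j := by
  simp only [phiV]
  have hsum : ∑ i, (p i + q i) * B i j = (∑ i, p i * B i j) + ∑ i, q i * B i j := by
    rw [← Finset.sum_add_distrib]
    exact Finset.sum_congr rfl fun k _ => by ring
  have hnum : a * u * Polynomial.derivative (p j + q j)
      - a * Polynomial.derivative u * (p j + q j) + u * ∑ i, (p i + q i) * B i j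
      = (a * u * Polynomial.derivative (p j) - a * Polynomial.derivative u * p j
          + u * ∑ i, p i * B i j)
        + (a * u * Polynomial.derivative (q j) - a * Polynomial.derivative u * q j
          + u * ∑ i, q i * B i j) := by
    simp only [derivative_add]
    rw [hsum]
    ring
  rw [hnum, map_add, add_div]

lemma phiV_smul (a u : Polynomial K) (B : Matrix (Fin n) (Fin n) (Polynomial K))
    (c : K) (p : Fin n → Polynomial K) (j : Fin n) :
    phiV a u B (fun k => Polynomial.C c * p k) j
      = algebraMap (Polynomial K) (RatFunc K) (Polynomial.C c) * phiV a u B p j := by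
  simp only [phiV]
  have hsum : ∑ i, (Polynomial.C c * p i) * B i j
      = Polynomial.C c * ∑ i, p i * B i j := by
    rw [Finset.mul_sum]
    exact Finset.sum_congr rfl fun k _ => by ring
  have hnum : a * u * Polynomial.derivative (Polynomial.C c * p j)
      - a * Polynomial.derivative u * (Polynomial.C c * p j)
      + u * ∑ i, (Polynomial.C c * p i) * B i j
      = Polynomial.C c * (a * u * Polynomial.derivative (p j)
          - a * Polynomial.derivative u * p j + u * ∑ i, p i * B i j) := by
    simp only [derivative_mul, derivative_C, zero_mul, zero_add]
    rw [hsum]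
    ring
  rw [hnum, map_mul, mul_div_assoc]

lemma ltVec_eq_sum (p : Fin n → Polynomial K) :
    ltVec p = ∑ i, (p i).coeff (vdeg p) • monomialVec i (vdeg p) := by
  funext k
  simp only [Finset.sum_apply, Pi.smul_apply, monomialVec, smul_ite, smul_zero,
    Finset.sum_ite_eq, Finset.mem_univ, if_pos, ltVec]
  rw [Polynomial.smul_eq_C_mul]

lemma decomp (a u : Polynomial K) (B : Matrix (Fin n) (Fin n) (Polynomial K))
    (p : Fin n → Polynomial K) :
    ∃ p₀ r : Fin n → Polynomial K, r ∈ NVcomplement a u B ∧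
      ∀ j, algebraMap (Polynomial K) (RatFunc K) (p j)
        = phiV a u B p₀ j + algebraMap (Polynomial K) (RatFunc K) (r j) := by
  suffices H : ∀ N (p : Fin n → Polynomial K), muV p ≤ N →
      ∃ p₀ r : Fin n → Polynomial K, r ∈ NVcomplement a u B ∧
        ∀ j, algebraMap (Polynomial K) (RatFunc K) (p j)
          = phiV a u B p₀ j + algebraMap (Polynomial K) (RatFunc K) (r j) from
    H (muV p) p le_rfl
  intro N
  induction N using Nat.strong_induction_on with
  | _ N IH =>
    intro p hpN
    by_cases h0 : p = 0
    · refine ⟨0, 0, Submodule.zero_mem _, fun j => ?_⟩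
      rw [h0, phiV_zero]
      simp
    · by_cases hex : ∃ i, (p i).coeff (vdeg p) ≠ 0 ∧
          ∃ q ∈ phiPolyImage a u B, q ≠ 0 ∧ monomialVec i (vdeg p) = ltVec q
      · obtain ⟨i, hci, q, hqim, hq0, hlt⟩ := hex
        obtain ⟨hdq, hcoef⟩ := lt_analysis hq0 hlt
        set c := (p i).coeff (vdeg p) with hc
        set p' : Fin n → Polynomial K := fun k => p k - Polynomial.C c * q k with hp'
        have hcoefp' : ∀ k, (p' k).coeff (vdeg p)
            = if k = i then 0 else (p k).coeff (vdeg p) := by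
          intro k
          have hqk : (q k).coeff (vdeg p) = if k = i then 1 else 0 := by
            rw [← hdq]; exact hcoef k
          simp only [hp', Polynomial.coeff_sub, Polynomial.coeff_C_mul, hqk]
          by_cases hk : k = i <;> simp [hk, hc]
        have hdegp' : ∀ k, (p' k).natDegree ≤ vdeg p := by
          intro k
          refine le_trans (Polynomial.natDegree_sub_le _ _) (max_le (natDegree_le_vdeg p k) ?_)
          refine le_trans (Polynomial.natDegree_C_mul_le _ _) ?_
          rw [← hdq]
          exact natDegree_le_vdeg q k
        have hmu : muV p' < muV p := by
          refine muV_lt_case p p' h0 hdegp' i hci (by simp [hcoefp' i]) fun k hk => ?_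
          rw [hcoefp' k] at hk
          by_cases hki : k = i
          · simp [hki] at hk
          · simpa [hki] using hk
        obtain ⟨p₀', r', hr'mem, hid⟩ :=
          IH (muV p') (lt_of_lt_of_le hmu hpN) p' le_rfl
        obtain ⟨pq, hpq⟩ := hqim
        refine ⟨fun k => p₀' k + Polynomial.C c * pq k, r', hr'mem, fun j => ?_⟩
        have hpj : p j = p' j + Polynomial.C c * q j := by simp [hp']
        rw [hpj, map_add, map_mul, hid j, hpq j, phiV_add, phiV_smul]
        ring
      · push_neg at hex
        set p' : Fin n → Polynomial K := fun k => p k - ltVec p k with hp'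
        have hlt_mem : ltVec p ∈ NVcomplement a u B := by
          rw [ltVec_eq_sum]
          refine Submodule.sum_mem _ fun i _ => ?_
          by_cases hci : (p i).coeff (vdeg p) = 0
          · rw [hci, zero_smul]
            exact Submodule.zero_mem _
          · exact Submodule.smul_mem _ _ (Submodule.subset_span
              ⟨i, vdeg p, rfl, fun q hq hq0 => hex i hci q hq hq0⟩)
        have hcoefp' : ∀ k, (p' k).coeff (vdeg p) = 0 := by
          intro k
          simp [hp', ltVec, Polynomial.coeff_C_mul, Polynomial.coeff_X_pow]
        have hdegp' : ∀ k, (p' k).natDegree ≤ vdeg p := by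
          intro k
          refine le_trans (Polynomial.natDegree_sub_le _ _) (max_le (natDegree_le_vdeg p k) ?_)
          refine le_trans (Polynomial.natDegree_C_mul_le _ _) ?_
          simp
        obtain ⟨i, hi⟩ := exists_lead p h0
        have hmu : muV p' < muV p :=
          muV_lt_case p p' h0 hdegp' i hi (hcoefp' i) fun k hk => absurd (hcoefp' k) hk
        obtain ⟨p₀', r', hr'mem, hid⟩ :=
          IH (muV p') (lt_of_lt_of_le hmu hpN) p' le_rfl
        refine ⟨p₀', r' + ltVec p, Submodule.add_mem _ hr'mem hlt_mem, fun j => ?_⟩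
        have hpj : p j = p' j + ltVec p j := by simp [hp']
        rw [hpj, map_add, hid j, Pi.add_apply, map_add]
        ring

end Decomp

/-- Let `V` be a `K(x)`-vector-space basis of `A` with `aV′ = BV`, fix
`u ∈ K[x]`, and let `φ_V(p) = (a u p′ − a u′ p + u p B)/u²`. Then for every `p ∈ K[x]^n`
there exist `p₁ ∈ K[x]^n` and `p₂ ∈ N_V` such that `(p/a)V = ((p₁/u)V)′ + (p₂/a)V`, where
`N_V` is the standard complement of `im(φ_V)`. In particular, whenever `q = φ_V(p)`, one
has `(q/a)V = ((p/u)V)′`, so `(q/a)V` is integrable in `A`. -/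
theorem polynomial_reduction {K : Type} [Field K] [CharZero K]
    (m : Polynomial (RatFunc K)) [Fact (Irreducible m)]
    (D : AdjoinRoot m → AdjoinRoot m) (hD : IsDerivationOnA m D)
    (V : Fin m.natDegree → AdjoinRoot m) (hV : IsKxBasis V)
    (a u : Polynomial K) (ha0 : a ≠ 0) (hu0 : u ≠ 0)
    (B : Matrix (Fin m.natDegree) (Fin m.natDegree) (Polynomial K))
    (hrel : DerivRel D V a B) :
    ∀ p : Fin m.natDegree → Polynomial K,
      (∃ p₁ : Fin m.natDegree → Polynomial K, ∃ p₂ ∈ NVcomplement a u B,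
        ∑ i, toA m (p i) / toA m a * V i =
          D (∑ i, toA m (p₁ i) / toA m u * V i) +
            ∑ i, toA m (p₂ i) / toA m a * V i) ∧
      ((∑ j, algebraMap (RatFunc K) (AdjoinRoot m)
          (phiV a u B p j / algebraMap (Polynomial K) (RatFunc K) a) * V j) =
        D (∑ j, toA m (p j) / toA m u * V j)) ∧
      (∃ g : AdjoinRoot m,
        (∑ j, algebraMap (RatFunc K) (AdjoinRoot m)
          (phiV a u B p j / algebraMap (Polynomial K) (RatFunc K) a) * V j) = D g) := by
  intro p
  have hmain := main_identity m hD V a u ha0 hu0 B hrel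
  refine ⟨?_, hmain p, ⟨_, hmain p⟩⟩
  obtain ⟨p₀, r, hrmem, hid⟩ := decomp a u B p
  refine ⟨p₀, r, hrmem, ?_⟩
  rw [← hmain p₀, ← Finset.sum_add_distrib]
  refine Finset.sum_congr rfl fun j _ => ?_
  have h2 : toA m (p j) = algebraMap (RatFunc K) (AdjoinRoot m) (phiV a u B p₀ j)
      + toA m (r j) := by
    have h := congrArg (algebraMap (RatFunc K) (AdjoinRoot m)) (hid j)
    rw [map_add] at h
    exact h
  have h3 : algebraMap (RatFunc K) (AdjoinRoot m)
        (phiV a u B p₀ j / algebraMap (Polynomial K) (RatFunc K) a)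
      = algebraMap (RatFunc K) (AdjoinRoot m) (phiV a u B p₀ j) / toA m a := by
    rw [map_div₀]
    rfl
  rw [h2, add_div, add_mul, h3]
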